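/- Let σ be a substitution on a finite alphabet A in which every letter has a growth type. If a letter a ∈ A has growth type (i, θ), then there exists a letter b of growth type (i, θ) having an occurrence in the word σ(a). -/

import Mathlib

open Filter Topology
open scoped Classical

namespace Cobham

def applyWord {A B : Type*} (σ : A → List B) (w : List A) : List B := w.flatMap σ

def iterWord {A : Type*} (σ : A → List A) (n : ℕ) (w : List A) : List A :=
  (applyWord σ)^[n] w

def lengthIter {A : Type*} (σ : A → List A) (n : ℕ) (a : A) : ℕ :=
  (iterWord σ n [a]).length

def IsSubstitution {A : Type*} (σ : A → List A) : Prop :=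
  ∀ a : A, Tendsto (fun n => lengthIter σ n a) atTop atTop

def IsPrefixOfSeq {A : Type*} (w : List A) (x : ℕ → A) : Prop :=
  ∀ i : Fin w.length, w.get i = x i

def seqTake {A : Type*} (x : ℕ → A) (n : ℕ) : List A := List.ofFn (fun i : Fin n => x i)

def IsFixedPoint {A : Type*} (σ : A → List A) (x : ℕ → A) : Prop :=
  ∀ n : ℕ, IsPrefixOfSeq (applyWord σ (seqTake x n)) x

def IsProperFixedPoint {A : Type*} (σ : A → List A) (x : ℕ → A) : Prop :=
  IsFixedPoint σ x ∧ ∀ a : A, ∃ i : ℕ, x i = a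

def incidenceMatrix {A : Type*} [DecidableEq A] (σ : A → List A) : Matrix A A ℝ :=
  fun i j => ((σ j).count i : ℝ)

def IsPrimitiveMatrix {A : Type*} [Fintype A] [DecidableEq A] (M : Matrix A A ℝ) : Prop :=
  ∃ n : ℕ, 0 < n ∧ ∀ i j, 0 < (M ^ n) i j

def IsDominantEigenvalue {A : Type*} [Fintype A] [DecidableEq A] (M : Matrix A A ℝ) (α : ℝ) : Prop :=
  0 ≤ α ∧ Module.End.HasEigenvalue (Matrix.toLin' M) α ∧
    ∀ μ : ℂ, Module.End.HasEigenvalue (Matrix.toLin' (M.map Complex.ofReal)) μ → ‖μ‖ ≤ α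

def IsPerron (α : ℝ) : Prop :=
  IsIntegral ℤ α ∧ 1 ≤ α ∧
    ∀ μ : ℂ, Polynomial.aeval μ (minpoly ℤ α) = 0 → μ ≠ (α : ℂ) → ‖μ‖ < α

def MultIndep (α β : ℝ) : Prop :=
  ∀ k l : ℕ, 0 < k → 0 < l → α ^ k ≠ β ^ l

def IsUltimatelyPeriodic {C : Type*} (x : ℕ → C) : Prop :=
  ∃ p : ℕ, 0 < p ∧ ∃ N : ℕ, ∀ n : ℕ, N ≤ n → x (n + p) = x n

def IsPeriodic {C : Type*} (x : ℕ → C) : Prop :=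
  ∃ p : ℕ, 0 < p ∧ ∀ n : ℕ, x (n + p) = x n

def OccursAt {C : Type*} (w : List C) (x : ℕ → C) (i : ℕ) : Prop :=
  ∀ j : Fin w.length, w.get j = x (i + j)

def OccursInfinitely {C : Type*} (w : List C) (x : ℕ → C) : Prop :=
  ∀ N : ℕ, ∃ i : ℕ, N ≤ i ∧ OccursAt w x i

def BoundedGaps {C : Type*} (w : List C) (x : ℕ → C) : Prop :=
  ∃ g : ℕ, ∀ N : ℕ, ∃ i : ℕ, N ≤ i ∧ i < N + g ∧ OccursAt w x i

def InLanguage {C : Type*} (w : List C) (x : ℕ → C) : Prop := ∃ i : ℕ, OccursAt w x i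

def IsSubstitutiveSeq {C : Type*} (α : ℝ) (x : ℕ → C) : Prop :=
  ∃ (B : Type) (_ : Fintype B) (_ : DecidableEq B) (σ : B → List B) (y : ℕ → B) (φ : B → C),
    IsSubstitution σ ∧ IsProperFixedPoint σ y ∧
      IsDominantEigenvalue (incidenceMatrix σ) α ∧ x = φ ∘ y

def IsPrimitiveSubstitutiveSeq {C : Type*} (α : ℝ) (x : ℕ → C) : Prop :=
  ∃ (B : Type) (_ : Fintype B) (_ : DecidableEq B) (σ : B → List B) (y : ℕ → B) (φ : B → C),
    IsSubstitution σ ∧ IsPrimitiveMatrix (incidenceMatrix σ) ∧ IsProperFixedPoint σ y ∧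
      IsDominantEigenvalue (incidenceMatrix σ) α ∧ x = φ ∘ y

def HasGrowthTypeWith {A : Type*} (σ : A → List A) (a : A) (d : ℕ) (θ : ℝ) (c : ℝ) : Prop :=
  0 < c ∧ 1 ≤ θ ∧
    Tendsto (fun n : ℕ => (lengthIter σ n a : ℝ) / (c * (n : ℝ) ^ d * θ ^ n)) atTop (𝓝 1)

def HasGrowthType {A : Type*} (σ : A → List A) (a : A) (d : ℕ) (θ : ℝ) : Prop :=
  ∃ c : ℝ, HasGrowthTypeWith σ a d θ c

noncomputable def lambdaSum {A : Type*} (d : A → ℕ) (θ c : A → ℝ) (Θ : ℝ) (D : ℕ)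
    (u : List A) : ℝ :=
  (u.map (fun b => if θ b = Θ ∧ d b = D then c b else 0)).sum

def restrictSub {A : Type*} {l : ℕ} (σ : A → List A) (part : A → Fin l) (i : Fin l) :
    {a : A // part a = i} → List {a : A // part a = i} :=
  fun a => (σ a.1).filterMap (fun b => if h : part b = i then some ⟨b, h⟩ else none)

def subMatrix {A : Type*} (M : Matrix A A ℝ) (P : A → Prop) :
    Matrix {a : A // P a} {a : A // P a} ℝ := fun a b => M a.1 b.1

def SatisfiesC {A : Type*} [DecidableEq A] (σ : A → List A) (l q : ℕ)
    (part : A → Fin l) : Prop :=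
  q < l ∧ Function.Surjective part ∧
  (∀ a b : A, a ∈ σ b → part a = part b ∨
      ((part b : ℕ) < q ∧ (part b : ℕ) < (part a : ℕ))) ∧
  (∀ i : Fin l, (i : ℕ) < q →
      (∀ a b : A, part a = i → part b = i → (σ b).count a = 0) ∨
      (∀ a b : A, part a = i → part b = i → 0 < (σ b).count a)) ∧
  (∀ i : Fin l, q ≤ (i : ℕ) → ∀ a b : A, part a = i → part b = i → 0 < (σ b).count a) ∧
  (∀ i : Fin l, (i : ℕ) < q →
      ∃ j : Fin l, (i : ℕ) < (j : ℕ) ∧ ∃ a b : A, part a = j ∧ part b = i ∧ a ∈ σ b) ∧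
  (∀ i : Fin l, (∃ a b : A, part a = i ∧ part b = i ∧ 0 < (σ b).count a) →
      ∃ (a : A) (u : List A), part a = i ∧
        (σ a).filter (fun b => decide (part b = i)) = a :: u ∧
        (u = [] ↔ ((∀ b : A, part b = i → b = a) ∧ (σ a).count a = 1)))

def IsGoodSubstitution {A : Type*} [Fintype A] [DecidableEq A] (σ : A → List A) (α : ℝ) : Prop :=
  IsSubstitution σ ∧ IsDominantEigenvalue (incidenceMatrix σ) α ∧
    ∃ (l q : ℕ) (part : A → Fin l), SatisfiesC σ l q part ∧
      ∃ i : Fin l, q ≤ (i : ℕ) ∧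
        IsDominantEigenvalue (incidenceMatrix (restrictSub σ part i)) α



lemma applyWord_append {A : Type*} (σ : A → List A) (u v : List A) :
    applyWord σ (u ++ v) = applyWord σ u ++ applyWord σ v := by
  simp [applyWord]

lemma iterWord_succ' {A : Type*} (σ : A → List A) (n : ℕ) (w : List A) :
    iterWord σ (n + 1) w = iterWord σ n (applyWord σ w) :=
  Function.iterate_succ_apply (applyWord σ) n w

lemma iterWord_append {A : Type*} (σ : A → List A) (n : ℕ) (u v : List A) :
    iterWord σ n (u ++ v) = iterWord σ n u ++ iterWord σ n v := by
  induction n generalizing u v with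
  | zero => simp [iterWord]
  | succ n ih => rw [iterWord_succ', iterWord_succ', iterWord_succ', applyWord_append, ih]

lemma iterWord_nil {A : Type*} (σ : A → List A) (n : ℕ) :
    iterWord σ n ([] : List A) = [] := by
  induction n with
  | zero => rfl
  | succ n ih => rw [iterWord_succ']; simpa [applyWord] using ih

lemma length_iterWord {A : Type*} (σ : A → List A) (n : ℕ) (w : List A) :
    (iterWord σ n w).length = (w.map (lengthIter σ n)).sum := by
  induction w with
  | nil => simp [iterWord_nil]
  | cons b t ih =>
    have : (b :: t) = [b] ++ t := rfl
    rw [this, iterWord_append]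
    simp only [List.length_append, List.map_append, List.sum_append, ih]
    rfl

lemma lengthIter_succ {A : Type*} (σ : A → List A) (n : ℕ) (a : A) :
    lengthIter σ (n + 1) a = ((σ a).map (lengthIter σ n)).sum := by
  have h1 : applyWord σ [a] = σ a := by simp [applyWord]
  rw [lengthIter, iterWord_succ', h1, length_iterWord]

lemma list_sum_div (l : List ℝ) (g : ℝ) : l.sum / g = (l.map (fun x => x / g)).sum := by
  induction l with
  | nil => simp
  | cons x t ih => simp [add_div, ih]

lemma ratio_tendsto_zero {β θ : ℝ} (hβ : 0 < β) (hθ : 0 < θ) {d i : ℕ}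
    (h : β < θ ∨ (β = θ ∧ d < i)) :
    Tendsto (fun n : ℕ => ((n : ℝ) ^ d * β ^ n) / ((n : ℝ) ^ i * θ ^ n)) atTop (𝓝 0) := by
  rcases h with h | ⟨rfl, hd⟩
  · apply squeeze_zero' (g := fun n : ℕ => (n : ℝ) ^ d * (β / θ) ^ n)
    · filter_upwards with n; positivity
    · filter_upwards [eventually_ge_atTop 1] with n hn
      have hn1 : (1 : ℝ) ≤ (n : ℝ) := by exact_mod_cast hn
      have h1 : (1 : ℝ) ≤ (n : ℝ) ^ i := one_le_pow₀ hn1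
      have h2 : (0 : ℝ) < θ ^ n := by positivity
      have key : ((n : ℝ) ^ d * β ^ n) / ((n : ℝ) ^ i * θ ^ n)
          ≤ ((n : ℝ) ^ d * β ^ n) / θ ^ n := by
        apply div_le_div_of_nonneg_left (by positivity) h2
        nlinarith
      refine key.trans_eq ?_
      rw [div_pow, mul_div_assoc]
    · simpa using tendsto_pow_const_mul_const_pow_of_lt_one d (div_nonneg hβ.le hθ.le)
        ((div_lt_one hθ).mpr h)
  · apply squeeze_zero' (g := fun n : ℕ => 1 / (n : ℝ))
    · filter_upwards with n; positivity
    · filter_upwards [eventually_ge_atTop 1] with n hn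
      have hn1 : (1 : ℝ) ≤ (n : ℝ) := by exact_mod_cast hn
      have hn0 : (0 : ℝ) < (n : ℝ) := lt_of_lt_of_le one_pos hn1
      have hbn : (0 : ℝ) < β ^ n := by positivity
      have key : ((n : ℝ) ^ d * β ^ n) / ((n : ℝ) ^ i * β ^ n)
          = (n : ℝ) ^ d / (n : ℝ) ^ i := by
        rw [mul_div_mul_comm, div_self hbn.ne', mul_one]
      rw [key, div_le_div_iff₀ (by positivity) hn0, one_mul, ← pow_succ]
      exact pow_le_pow_right₀ hn1 hd
    · exact tendsto_one_div_atTop_nhds_zero_nat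

/-- a letter of growth type `(i, θ)` produces a letter of the same growth
type in its image. -/
theorem stmt18 {A : Type} [Fintype A] (σ : A → List A) (hσ : IsSubstitution σ)
    (hall : ∀ b : A, ∃ (d : ℕ) (θ' : ℝ), HasGrowthType σ b d θ')
    (a : A) (i : ℕ) (θ : ℝ) (ha : HasGrowthType σ a i θ) :
    ∃ b : A, b ∈ σ a ∧ HasGrowthType σ b i θ := by
  obtain ⟨c, hc, hθ1, T1⟩ := ha
  have hθ0 : (0 : ℝ) < θ := zero_lt_one.trans_le hθ1
  by_contra hcon
  push_neg at hcon
  choose d θb hgrow using hall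
  -- Step 1: cast sum identity
  have hsum : ∀ n : ℕ, (lengthIter σ (n + 1) a : ℝ)
      = ((σ a).map fun b => (lengthIter σ n b : ℝ)).sum := by
    intro n
    rw [lengthIter_succ, Nat.cast_list_sum, List.map_map]
    rfl
  -- Step 2: the limit of |σ^{n+1}(a)| / (n^i θ^n) is c θ
  have T2 : Tendsto (fun n : ℕ => (lengthIter σ (n + 1) a : ℝ)
      / (c * ((n : ℝ) + 1) ^ i * θ ^ (n + 1))) atTop (𝓝 1) := by
    have := T1.comp (tendsto_add_atTop_nat 1)
    apply this.congr
    intro n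
    simp [Function.comp]
  have T3 : Tendsto (fun n : ℕ => (c * ((n : ℝ) + 1) ^ i * θ ^ (n + 1))
      / ((n : ℝ) ^ i * θ ^ n)) atTop (𝓝 (c * θ)) := by
    have hlim : Tendsto (fun n : ℕ => (1 + 1 / (n : ℝ)) ^ i * (c * θ)) atTop (𝓝 (c * θ)) := by
      have h1 : Tendsto (fun n : ℕ => 1 + 1 / (n : ℝ)) atTop (𝓝 1) := by
        simpa using (tendsto_const_nhds (x := (1 : ℝ))).add tendsto_one_div_atTop_nhds_zero_nat
      simpa using (h1.pow i).mul_const (c * θ)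
    apply hlim.congr'
    filter_upwards [eventually_ge_atTop 1] with n hn
    have hn0 : (0 : ℝ) < (n : ℝ) := by exact_mod_cast hn
    have e : (1 + 1 / (n : ℝ)) * n = n + 1 := by
      rw [add_mul, one_div, inv_mul_cancel₀ hn0.ne', one_mul]
    rw [eq_div_iff (by positivity), ← e, mul_pow]
    ring
  have T4 : Tendsto (fun n : ℕ => (lengthIter σ (n + 1) a : ℝ)
      / ((n : ℝ) ^ i * θ ^ n)) atTop (𝓝 (c * θ)) := by
    have hmul := T2.mul T3
    rw [one_mul] at hmul
    apply hmul.congr'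
    filter_upwards [eventually_ge_atTop 1] with n hn
    have hn0 : (0 : ℝ) < (n : ℝ) := by exact_mod_cast hn
    have h1 : c * ((n : ℝ) + 1) ^ i * θ ^ (n + 1) ≠ 0 := by positivity
    have h2 : (n : ℝ) ^ i * θ ^ n ≠ 0 := by positivity
    field_simp
  -- Step 3: eventual bound on each term
  have hbound : ∀ b ∈ σ a, ∀ᶠ n : ℕ in atTop,
      (lengthIter σ n b : ℝ) / ((n : ℝ) ^ i * θ ^ n) ≤ c * θ + 1 := by
    intro b hb
    have hS : ∀ᶠ n : ℕ in atTop,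
        (lengthIter σ (n + 1) a : ℝ) / ((n : ℝ) ^ i * θ ^ n) ≤ c * θ + 1 :=
      T4.eventually (eventually_le_nhds (by linarith))
    filter_upwards [hS, eventually_ge_atTop 1] with n hSn hn
    refine le_trans ?_ hSn
    have hn0 : (0 : ℝ) < (n : ℝ) := by exact_mod_cast hn
    have hnum : (lengthIter σ n b : ℝ) ≤ (lengthIter σ (n + 1) a : ℝ) := by
      have : lengthIter σ n b ≤ lengthIter σ (n + 1) a := by
        rw [lengthIter_succ]
        exact List.le_sum_of_mem (List.mem_map_of_mem (f := lengthIter σ n) hb)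
      exact_mod_cast this
    have hden : (0 : ℝ) < (n : ℝ) ^ i * θ ^ n := by positivity
    exact div_le_div_of_nonneg_right hnum hden.le |>.trans_eq rfl
  -- Step 4: each term tends to 0
  have hzero : ∀ b ∈ σ a, Tendsto (fun n : ℕ =>
      (lengthIter σ n b : ℝ) / ((n : ℝ) ^ i * θ ^ n)) atTop (𝓝 0) := by
    intro b hb
    obtain ⟨cb, hcb, hθb1, Tb⟩ := hgrow b
    have hθb0 : (0 : ℝ) < θb b := zero_lt_one.trans_le hθb1
    have small : θb b < θ ∨ (θb b = θ ∧ d b < i) → Tendsto (fun n : ℕ =>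
        (lengthIter σ n b : ℝ) / ((n : ℝ) ^ i * θ ^ n)) atTop (𝓝 0) := by
      intro hcase
      have R := ratio_tendsto_zero hθb0 hθ0 hcase
      have hmul := Tb.mul (R.const_mul cb)
      have hval : (1 : ℝ) * (cb * 0) = 0 := by ring
      rw [hval] at hmul
      apply hmul.congr'
      filter_upwards [eventually_ge_atTop 1] with n hn
      have hn0 : (0 : ℝ) < (n : ℝ) := by exact_mod_cast hn
      have h1 : cb * (n : ℝ) ^ (d b) * (θb b) ^ n ≠ 0 := by positivity
      have h2 : (n : ℝ) ^ i * θ ^ n ≠ 0 := by positivity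
      field_simp
    have big : θ < θb b ∨ (θ = θb b ∧ i < d b) → False := by
      intro hcase
      have R := ratio_tendsto_zero hθ0 hθb0 hcase
      have hF : Tendsto (fun n : ℕ =>
          (lengthIter σ n b : ℝ) / (cb * (n : ℝ) ^ (d b) * (θb b) ^ n)) atTop (𝓝 0) := by
        apply squeeze_zero' (g := fun n : ℕ =>
          ((c * θ + 1) / cb) * (((n : ℝ) ^ i * θ ^ n) / ((n : ℝ) ^ (d b) * (θb b) ^ n)))
        · filter_upwards with n; positivity
        · filter_upwards [hbound b hb, eventually_ge_atTop 1] with n hB hn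
          have hn0 : (0 : ℝ) < (n : ℝ) := by exact_mod_cast hn
          have hq : (0 : ℝ) ≤ ((n : ℝ) ^ i * θ ^ n) / (cb * (n : ℝ) ^ (d b) * (θb b) ^ n) := by
            positivity
          have h1 := mul_le_mul_of_nonneg_right hB hq
          have e1 : (lengthIter σ n b : ℝ) / ((n : ℝ) ^ i * θ ^ n)
              * (((n : ℝ) ^ i * θ ^ n) / (cb * (n : ℝ) ^ (d b) * (θb b) ^ n))
              = (lengthIter σ n b : ℝ) / (cb * (n : ℝ) ^ (d b) * (θb b) ^ n) := by
            rw [div_mul_div_comm, mul_comm ((n : ℝ) ^ i * θ ^ n)]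
            rw [mul_div_mul_right _ _ (by positivity : ((n : ℝ) ^ i * θ ^ n) ≠ 0)]
          have e2 : (c * θ + 1) * (((n : ℝ) ^ i * θ ^ n) / (cb * (n : ℝ) ^ (d b) * (θb b) ^ n))
              = ((c * θ + 1) / cb) * (((n : ℝ) ^ i * θ ^ n) / ((n : ℝ) ^ (d b) * (θb b) ^ n)) := by
            field_simp
          rw [e1, e2] at h1
          exact h1
        · simpa using R.const_mul ((c * θ + 1) / cb)
      exact one_ne_zero (tendsto_nhds_unique Tb hF)
    rcases lt_trichotomy (θb b) θ with hlt | heq | hgt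
    · exact small (Or.inl hlt)
    · rcases Nat.lt_trichotomy (d b) i with hdlt | hdeq | hdgt
      · exact small (Or.inr ⟨heq, hdlt⟩)
      · exact absurd (hdeq ▸ heq ▸ hgrow b) (hcon b hb)
      · exact absurd (Or.inr ⟨heq.symm, hdgt⟩) (fun h => big h)
    · exact absurd (Or.inl hgt) (fun h => big h)
  -- Step 5: the sum of the terms tends to 0, contradiction
  have Tsum : Tendsto (fun n : ℕ => ((σ a).map fun b =>
      (lengthIter σ n b : ℝ) / ((n : ℝ) ^ i * θ ^ n)).sum) atTop (𝓝 0) := by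
    have h0 : (((σ a).map fun _ : A => (0 : ℝ)).sum) = 0 := by simp
    have := tendsto_list_sum (σ a)
      (f := fun b (n : ℕ) => (lengthIter σ n b : ℝ) / ((n : ℝ) ^ i * θ ^ n))
      (a := fun _ => (0 : ℝ)) hzero
    rwa [h0] at this
  have Tsum' : Tendsto (fun n : ℕ => (lengthIter σ (n + 1) a : ℝ)
      / ((n : ℝ) ^ i * θ ^ n)) atTop (𝓝 0) := by
    apply Tsum.congr
    intro n
    rw [hsum n, list_sum_div, List.map_map]
    rfl
  have : c * θ = 0 := tendsto_nhds_unique T4 Tsum'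
  nlinarith


end Cobham
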